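/- The function F is differentiable on ℝ with derivative F'(Q) = ∬_Ω k(x,s) Λ(x,s) e^{-Q Λ(x,s)} d(s,x), and for all Q ∈ (0,1] one has 0 ≤ F'(Q) < R₀ e^{-1}/Q. -/

import Mathlib

open MeasureTheory Real Set Filter

/-- `Λ(x,s) = ∫_s^x θ(t) dt`. -/
noncomputable def Lam (θ : ℝ → ℝ) (x s : ℝ) : ℝ := ∫ t in s..x, θ t

/-- `w(x;Q) = Q e^{-γx} ∫₀^x e^{γs} θ(s) e^{-Q Λ(x,s)} ds`. -/
noncomputable def w (γ : ℝ) (θ : ℝ → ℝ) (Q x : ℝ) : ℝ :=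
  Q * Real.exp (-γ * x) * ∫ s in (0:ℝ)..x, Real.exp (γ * s) * θ s * Real.exp (-Q * Lam θ x s)
/-- The kernel `k(x,s) = (p(x)/N)·θ(s)·e^{-γ(x-s)}`. -/
noncomputable def kker (γ N : ℝ) (p θ : ℝ → ℝ) (x s : ℝ) : ℝ :=
  (p x / N) * θ s * Real.exp (-γ * (x - s))

/-- The triangle `Ω = {(x,s) : 0 ≤ s ≤ x ≤ A}` (first coordinate `x`, second `s`). -/
def Tri (A : ℝ) : Set (ℝ × ℝ) := {q | 0 ≤ q.2 ∧ q.2 ≤ q.1 ∧ q.1 ≤ A}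

/-- Basic reproductive number `R₀ = ∬_Ω k(x,s) d(s,x)`. -/
noncomputable def R0 (γ N A : ℝ) (p θ : ℝ → ℝ) : ℝ :=
  ∫ q in Tri A, kker γ N p θ q.1 q.2

/-- `F(Q) = 1 - ∬_Ω k(x,s) e^{-Q Λ(x,s)} d(s,x)`. -/
noncomputable def FF (γ N A : ℝ) (p θ : ℝ → ℝ) (Q : ℝ) : ℝ :=
  1 - ∫ q in Tri A, kker γ N p θ q.1 q.2 * Real.exp (-Q * Lam θ q.1 q.2)

/-- Iteration map `T(Q) = Q·(1 - F(Q))`. -/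
noncomputable def TT (γ N A : ℝ) (p θ : ℝ → ℝ) (Q : ℝ) : ℝ :=
  Q * (1 - FF γ N A p θ Q)

lemma texp_le (t : ℝ) : t * Real.exp (-t) ≤ Real.exp (-1) := by
  have h := Real.add_one_le_exp (t - 1)
  calc t * Real.exp (-t) ≤ Real.exp (t - 1) * Real.exp (-t) :=
        mul_le_mul_of_nonneg_right (by linarith) (Real.exp_nonneg _)
    _ = Real.exp (-1) := by rw [← Real.exp_add]; ring_nf

lemma texp_lt {t : ℝ} (ht : t ≠ 1) : t * Real.exp (-t) < Real.exp (-1) := by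
  have h := Real.add_one_lt_exp (x := t - 1) (by intro h; apply ht; linarith)
  calc t * Real.exp (-t) < Real.exp (t - 1) * Real.exp (-t) :=
        mul_lt_mul_of_pos_right (by linarith) (Real.exp_pos _)
    _ = Real.exp (-1) := by rw [← Real.exp_add]; ring_nf

set_option maxHeartbeats 2000000 in
/-- `F` is differentiable with
`F'(Q) = ∬_Ω k Λ e^{-QΛ}`, and `0 ≤ F'(Q) < R₀ e^{-1}/Q` for `Q ∈ (0,1]`. -/
theorem F_deriv (γ A N : ℝ) (hγ : 0 < γ) (hA : 0 < A) (hN : 0 < N)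
    (θ p : ℝ → ℝ)
    (hθc : ContinuousOn θ (Set.Icc 0 A)) (hθpos : ∀ x ∈ Set.Icc 0 A, 0 < θ x)
    (hpc : ContinuousOn p (Set.Icc 0 A)) (hppos : ∀ x ∈ Set.Icc 0 A, 0 < p x)
    (hnorm : (1/N) * ∫ x in (0:ℝ)..A, p x = 1) :
    (∀ Q : ℝ, HasDerivAt (FF γ N A p θ)
      (∫ q in Tri A, kker γ N p θ q.1 q.2 * Lam θ q.1 q.2 *
        Real.exp (-Q * Lam θ q.1 q.2)) Q) ∧
    ∀ Q ∈ Set.Ioc (0:ℝ) 1,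
      0 ≤ (∫ q in Tri A, kker γ N p θ q.1 q.2 * Lam θ q.1 q.2 *
        Real.exp (-Q * Lam θ q.1 q.2)) ∧
      (∫ q in Tri A, kker γ N p θ q.1 q.2 * Lam θ q.1 q.2 *
        Real.exp (-Q * Lam θ q.1 q.2)) < R0 γ N A p θ * Real.exp (-1) / Q := by
  -- basic facts about the triangle
  have hTri_closed : IsClosed (Tri A) := by
    have h : Tri A = {q : ℝ × ℝ | 0 ≤ q.2} ∩ ({q | q.2 ≤ q.1} ∩ {q | q.1 ≤ A}) := by
      ext q; simp [Tri, Set.mem_setOf_eq, and_assoc]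
    rw [h]
    exact (isClosed_le continuous_const continuous_snd).inter
      ((isClosed_le continuous_snd continuous_fst).inter
        (isClosed_le continuous_fst continuous_const))
  have hTri_sub : Tri A ⊆ Set.Icc ((0:ℝ),(0:ℝ)) ((A,A) : ℝ × ℝ) := by
    rintro ⟨x, s⟩ ⟨h1, h2, h3⟩
    simp only [Set.mem_Icc, Prod.le_def]
    exact ⟨⟨le_trans h1 h2, h1⟩, ⟨h3, le_trans h2 h3⟩⟩
  have hTri_cpt : IsCompact (Tri A) := isCompact_Icc.of_isClosed_subset hTri_closed hTri_sub
  have hTri_meas : MeasurableSet (Tri A) := hTri_closed.measurableSet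
  have hmem1 : ∀ q ∈ Tri A, q.1 ∈ Set.Icc (0:ℝ) A := fun q hq => ⟨le_trans hq.1 hq.2.1, hq.2.2⟩
  have hmem2 : ∀ q ∈ Tri A, q.2 ∈ Set.Icc (0:ℝ) A := fun q hq => ⟨hq.1, le_trans hq.2.1 hq.2.2⟩
  have h00 : ((0:ℝ), (0:ℝ)) ∈ Tri A := ⟨le_rfl, le_rfl, hA.le⟩
  -- continuity of Λ on the triangle
  have hθint : ∀ a ∈ Set.Icc (0:ℝ) A, IntervalIntegrable θ volume 0 a := by
    intro a ha
    apply ContinuousOn.intervalIntegrable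
    apply hθc.mono
    rw [Set.uIcc_of_le ha.1]
    exact Set.Icc_subset_Icc le_rfl ha.2
  have hG : ContinuousOn (fun x => ∫ t in (0:ℝ)..x, θ t) (Set.Icc 0 A) := by
    have h := intervalIntegral.continuousOn_primitive_interval
      (a := (0:ℝ)) (b := A) (f := θ) (μ := volume)
      (by rw [Set.uIcc_of_le hA.le]; exact hθc.integrableOn_compact isCompact_Icc)
    rwa [Set.uIcc_of_le hA.le] at h
  have hl_eq : ∀ q ∈ Tri A,
      Lam θ q.1 q.2 = (∫ t in (0:ℝ)..q.1, θ t) - ∫ t in (0:ℝ)..q.2, θ t := by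
    intro q hq
    exact (intervalIntegral.integral_interval_sub_left
      (hθint q.1 (hmem1 q hq)) (hθint q.2 (hmem2 q hq))).symm
  have hl_cont : ContinuousOn (fun q : ℝ × ℝ => Lam θ q.1 q.2) (Tri A) := by
    apply ContinuousOn.congr
      (f := fun q : ℝ × ℝ => (∫ t in (0:ℝ)..q.1, θ t) - ∫ t in (0:ℝ)..q.2, θ t)
    · exact (hG.comp continuous_fst.continuousOn hmem1).sub
        (hG.comp continuous_snd.continuousOn hmem2)
    · exact fun q hq => hl_eq q hq
  -- continuity of the kernel on the triangle
  have hk_cont : ContinuousOn (fun q : ℝ × ℝ => kker γ N p θ q.1 q.2) (Tri A) := by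
    have h : (fun q : ℝ × ℝ => kker γ N p θ q.1 q.2)
        = fun q : ℝ × ℝ => (p q.1 / N) * θ q.2 * Real.exp (-γ * (q.1 - q.2)) := by
      funext q; rfl
    rw [h]
    exact (((hpc.comp continuous_fst.continuousOn hmem1).div_const N).mul
      (hθc.comp continuous_snd.continuousOn hmem2)).mul
      (Real.continuous_exp.comp (by continuity)).continuousOn
  -- bounds on the compact triangle
  obtain ⟨K, hK⟩ := hTri_cpt.exists_bound_of_continuousOn hk_cont
  obtain ⟨L, hL⟩ := hTri_cpt.exists_bound_of_continuousOn hl_cont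
  have hK0 : 0 ≤ K := le_trans (norm_nonneg _) (hK _ h00)
  have hL0 : 0 ≤ L := le_trans (norm_nonneg _) (hL _ h00)
  have habs : ∀ q ∈ Tri A, |Lam θ q.1 q.2| ≤ L := fun q hq => hL q hq
  -- the key differentiation under the integral sign
  have key : ∀ Q₀ : ℝ,
      Integrable (fun q : ℝ × ℝ =>
        -(kker γ N p θ q.1 q.2 * Lam θ q.1 q.2 * Real.exp (-Q₀ * Lam θ q.1 q.2)))
        (volume.restrict (Tri A)) ∧
      HasDerivAt (fun Q => ∫ q in Tri A, kker γ N p θ q.1 q.2 * Real.exp (-Q * Lam θ q.1 q.2))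
        (∫ q in Tri A,
          -(kker γ N p θ q.1 q.2 * Lam θ q.1 q.2 * Real.exp (-Q₀ * Lam θ q.1 q.2))) Q₀ := by
    intro Q₀
    have hcontQ : ∀ Q : ℝ, ContinuousOn
        (fun q : ℝ × ℝ => kker γ N p θ q.1 q.2 * Real.exp (-Q * Lam θ q.1 q.2)) (Tri A) :=
      fun Q => hk_cont.mul (continuousOn_const.mul hl_cont).rexp
    have hεexp : ∀ Q ∈ Metric.ball Q₀ 1, ∀ q ∈ Tri A,
        Real.exp (-Q * Lam θ q.1 q.2) ≤ Real.exp ((|Q₀| + 1) * L) := by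
      intro Q hQ q hq
      apply Real.exp_le_exp.2
      have h2 : |Q - Q₀| < 1 := by simpa [Real.dist_eq] using hQ
      have h1 : |Q| ≤ |Q₀| + 1 := by
        have := abs_sub_abs_le_abs_sub Q Q₀
        linarith
      calc -Q * Lam θ q.1 q.2 ≤ |(-Q) * Lam θ q.1 q.2| := le_abs_self _
        _ = |Q| * |Lam θ q.1 q.2| := by rw [abs_mul, abs_neg]
        _ ≤ (|Q₀| + 1) * L := mul_le_mul h1 (habs q hq) (abs_nonneg _) (by positivity)
    have hmeas : ∀ᶠ Q in nhds Q₀, AEStronglyMeasurable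
        (fun q : ℝ × ℝ => kker γ N p θ q.1 q.2 * Real.exp (-Q * Lam θ q.1 q.2))
        (volume.restrict (Tri A)) :=
      Filter.Eventually.of_forall fun Q => (hcontQ Q).aestronglyMeasurable hTri_meas
    have hint : Integrable
        (fun q : ℝ × ℝ => kker γ N p θ q.1 q.2 * Real.exp (-Q₀ * Lam θ q.1 q.2))
        (volume.restrict (Tri A)) := (hcontQ Q₀).integrableOn_compact hTri_cpt
    have h'meas : AEStronglyMeasurable
        (fun q : ℝ × ℝ =>
          -(kker γ N p θ q.1 q.2 * Lam θ q.1 q.2 * Real.exp (-Q₀ * Lam θ q.1 q.2)))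
        (volume.restrict (Tri A)) :=
      (((hk_cont.mul hl_cont).mul
        (continuousOn_const.mul hl_cont).rexp).neg).aestronglyMeasurable hTri_meas
    have hbound : ∀ᵐ q ∂(volume.restrict (Tri A)), ∀ Q ∈ Metric.ball Q₀ 1,
        ‖-(kker γ N p θ q.1 q.2 * Lam θ q.1 q.2 * Real.exp (-Q * Lam θ q.1 q.2))‖
          ≤ K * (L * Real.exp ((|Q₀| + 1) * L)) := by
      refine (ae_restrict_iff' hTri_meas).2 (Filter.Eventually.of_forall fun q hq => ?_)
      intro Q hQ
      have h1 : ‖-(kker γ N p θ q.1 q.2 * Lam θ q.1 q.2 * Real.exp (-Q * Lam θ q.1 q.2))‖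
          = ‖kker γ N p θ q.1 q.2‖ * (‖Lam θ q.1 q.2‖ * Real.exp (-Q * Lam θ q.1 q.2)) := by
        rw [norm_neg]
        simp only [norm_mul, Real.norm_eq_abs, abs_of_pos (Real.exp_pos _), mul_assoc]
      rw [h1]
      exact mul_le_mul (hK q hq)
        (mul_le_mul (hL q hq) (hεexp Q hQ q hq) (Real.exp_nonneg _) hL0)
        (by positivity) hK0
    have hbint : Integrable (fun _ : ℝ × ℝ => K * (L * Real.exp ((|Q₀| + 1) * L)))
        (volume.restrict (Tri A)) :=
      integrableOn_const hTri_cpt.measure_lt_top.ne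
    have hdiff : ∀ᵐ q ∂(volume.restrict (Tri A)), ∀ Q ∈ Metric.ball Q₀ 1,
        HasDerivAt (fun Q => kker γ N p θ q.1 q.2 * Real.exp (-Q * Lam θ q.1 q.2))
          (-(kker γ N p θ q.1 q.2 * Lam θ q.1 q.2 * Real.exp (-Q * Lam θ q.1 q.2))) Q := by
      refine Filter.Eventually.of_forall fun q => ?_
      intro Q hQ
      have h1 : HasDerivAt (fun Q : ℝ => -Q * Lam θ q.1 q.2) (-Lam θ q.1 q.2) Q := by
        have h := hasDerivAt_mul_const (x := Q) (-(Lam θ q.1 q.2))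
        simpa [neg_mul, mul_neg, mul_comm] using h
      have h3 := (h1.exp).const_mul (kker γ N p θ q.1 q.2)
      exact h3.congr_deriv (by ring)
    exact hasDerivAt_integral_of_dominated_loc_of_deriv_le
      (F := fun Q (q : ℝ × ℝ) => kker γ N p θ q.1 q.2 * Real.exp (-Q * Lam θ q.1 q.2))
      (F' := fun Q (q : ℝ × ℝ) =>
        -(kker γ N p θ q.1 q.2 * Lam θ q.1 q.2 * Real.exp (-Q * Lam θ q.1 q.2)))
      (bound := fun _ => K * (L * Real.exp ((|Q₀| + 1) * L)))
      (Metric.ball_mem_nhds Q₀ one_pos) hmeas hint h'meas hbound hbint hdiff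
  constructor
  · intro Q
    have h := (key Q).2
    have h2 : HasDerivAt (FF γ N A p θ)
        (0 - ∫ q in Tri A,
          -(kker γ N p θ q.1 q.2 * Lam θ q.1 q.2 * Real.exp (-Q * Lam θ q.1 q.2))) Q :=
      (hasDerivAt_const Q (1:ℝ)).sub h
    have h3 : (0:ℝ) - (∫ q in Tri A,
        -(kker γ N p θ q.1 q.2 * Lam θ q.1 q.2 * Real.exp (-Q * Lam θ q.1 q.2)))
        = ∫ q in Tri A, kker γ N p θ q.1 q.2 * Lam θ q.1 q.2 * Real.exp (-Q * Lam θ q.1 q.2) := by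
      rw [integral_neg]; ring
    rwa [h3] at h2
  · intro Q hQ
    obtain ⟨hQ0, hQ1⟩ := hQ
    have hl_nonneg : ∀ q ∈ Tri A, 0 ≤ Lam θ q.1 q.2 := by
      intro q hq
      apply intervalIntegral.integral_nonneg hq.2.1
      intro t ht
      exact (hθpos t ⟨le_trans hq.1 ht.1, le_trans ht.2 hq.2.2⟩).le
    have hk_pos : ∀ q ∈ Tri A, 0 < kker γ N p θ q.1 q.2 := by
      intro q hq
      have h1 := hppos q.1 (hmem1 q hq)
      have h2 := hθpos q.2 (hmem2 q hq)
      exact mul_pos (mul_pos (div_pos h1 hN) h2) (Real.exp_pos _)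
    constructor
    · apply setIntegral_nonneg hTri_meas
      intro q hq
      exact mul_nonneg (mul_nonneg (hk_pos q hq).le (hl_nonneg q hq)) (Real.exp_nonneg _)
    · -- strict inequality
      obtain ⟨M, hM⟩ := isCompact_Icc.exists_bound_of_continuousOn hθc
      obtain ⟨B, hBpos, hB⟩ : ∃ B : ℝ, 0 < B ∧ ∀ t ∈ Set.Icc (0:ℝ) A, ‖θ t‖ ≤ B := by
        refine ⟨M + 1, ?_, fun t ht => (hM t ht).trans (by linarith)⟩
        have := le_trans (norm_nonneg (θ 0)) (hM 0 ⟨le_rfl, hA.le⟩)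
        linarith
      obtain ⟨δ, hδpos, hδ1, hδ3⟩ : ∃ δ : ℝ, 0 < δ ∧ δ ≤ A/2 ∧ B * δ ≤ 1/2 := by
        refine ⟨min (A/2) (1/(2*B)), lt_min (by linarith) (by positivity),
          min_le_left _ _, ?_⟩
        have hm : min (A/2) (1/(2*B)) ≤ 1/(2*B) := min_le_right _ _
        calc B * min (A/2) (1/(2*B)) ≤ B * (1/(2*B)) :=
              mul_le_mul_of_nonneg_left hm hBpos.le
          _ = 1/2 := by field_simp [mul_comm]
      -- bound Λ ≤ B * (x - s) on the triangle
      have hlam_bd : ∀ q ∈ Tri A, Lam θ q.1 q.2 ≤ B * (q.1 - q.2) := by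
        intro q hq
        have h1 : ∀ t ∈ Set.uIoc q.2 q.1, ‖θ t‖ ≤ B := by
          intro t ht
          rw [Set.uIoc_of_le hq.2.1] at ht
          exact hB t ⟨le_trans hq.1 ht.1.le, le_trans ht.2 hq.2.2⟩
        have h2 := intervalIntegral.norm_integral_le_of_norm_le_const h1
        have h3 : |q.1 - q.2| = q.1 - q.2 := abs_of_nonneg (by linarith [hq.2.1])
        calc Lam θ q.1 q.2 ≤ |Lam θ q.1 q.2| := le_abs_self _
          _ = ‖∫ t in q.2..q.1, θ t‖ := rfl
          _ ≤ B * |q.1 - q.2| := h2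
          _ = B * (q.1 - q.2) := by rw [h3]
      -- integrability
      have hfint : IntegrableOn (fun q : ℝ × ℝ =>
          kker γ N p θ q.1 q.2 * Lam θ q.1 q.2 * Real.exp (-Q * Lam θ q.1 q.2)) (Tri A) :=
        ((hk_cont.mul hl_cont).mul
          (continuousOn_const.mul hl_cont).rexp).integrableOn_compact hTri_cpt
      have hgint : IntegrableOn (fun q : ℝ × ℝ =>
          kker γ N p θ q.1 q.2 * (Real.exp (-1) / Q)) (Tri A) :=
        (hk_cont.mul continuousOn_const).integrableOn_compact hTri_cpt
      -- pointwise comparison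
      have hle : ∀ q ∈ Tri A,
          Lam θ q.1 q.2 * Real.exp (-Q * Lam θ q.1 q.2) ≤ Real.exp (-1) / Q := by
        intro q hq
        have h1 := texp_le (Q * Lam θ q.1 q.2)
        have h2 : Lam θ q.1 q.2 * Real.exp (-Q * Lam θ q.1 q.2)
            = (Q * Lam θ q.1 q.2 * Real.exp (-(Q * Lam θ q.1 q.2))) / Q := by
          rw [neg_mul]; field_simp
        rw [h2]
        exact (div_le_div_iff_of_pos_right hQ0).2 h1
      have hdiff_pos : 0 < ∫ q in Tri A,
          (kker γ N p θ q.1 q.2 * (Real.exp (-1) / Q)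
            - kker γ N p θ q.1 q.2 * Lam θ q.1 q.2 * Real.exp (-Q * Lam θ q.1 q.2)) := by
        have hnn : (0 : ℝ × ℝ → ℝ) ≤ᵐ[volume.restrict (Tri A)] fun q =>
            kker γ N p θ q.1 q.2 * (Real.exp (-1) / Q)
              - kker γ N p θ q.1 q.2 * Lam θ q.1 q.2 * Real.exp (-Q * Lam θ q.1 q.2) := by
          refine (ae_restrict_iff' hTri_meas).2 (Filter.Eventually.of_forall fun q hq => ?_)
          simp only [Pi.zero_apply]
          have h1 := mul_le_mul_of_nonneg_left (hle q hq) (hk_pos q hq).le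
          rw [← mul_assoc] at h1
          linarith
        rw [setIntegral_pos_iff_support_of_nonneg_ae hnn (hgint.sub hfint)]
        have hsub : (({q : ℝ × ℝ | A/2 < q.1} ∩ {q : ℝ × ℝ | q.1 < A}) ∩ ({q : ℝ × ℝ | q.1 - δ < q.2} ∩ {q : ℝ × ℝ | q.2 < q.1})) ⊆
            Function.support (fun q : ℝ × ℝ =>
              kker γ N p θ q.1 q.2 * (Real.exp (-1) / Q)
                - kker γ N p θ q.1 q.2 * Lam θ q.1 q.2 * Real.exp (-Q * Lam θ q.1 q.2))
              ∩ Tri A := by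
          rintro q ⟨⟨h1, h2⟩, h3, h4⟩
          simp only [Set.mem_setOf_eq] at h1 h2 h3 h4
          have hqTri : q ∈ Tri A := ⟨by linarith, h4.le, h2.le⟩
          refine ⟨?_, hqTri⟩
          have hlam1 : Lam θ q.1 q.2 ≤ B * (q.1 - q.2) := hlam_bd q hqTri
          have hlam2 : B * (q.1 - q.2) < B * δ :=
            mul_lt_mul_of_pos_left (by linarith) hBpos
          have hlamlt : Lam θ q.1 q.2 < 1 := by linarith
          have hQL : Q * Lam θ q.1 q.2 ≤ 1 * Lam θ q.1 q.2 :=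
            mul_le_mul_of_nonneg_right hQ1 (hl_nonneg q hqTri)
          have hne : Q * Lam θ q.1 q.2 ≠ 1 := by
            have : Q * Lam θ q.1 q.2 < 1 := by nlinarith
            linarith
          have hstrict := texp_lt hne
          have h5 : Lam θ q.1 q.2 * Real.exp (-Q * Lam θ q.1 q.2) < Real.exp (-1) / Q := by
            have h2' : Lam θ q.1 q.2 * Real.exp (-Q * Lam θ q.1 q.2)
                = (Q * Lam θ q.1 q.2 * Real.exp (-(Q * Lam θ q.1 q.2))) / Q := by
              rw [neg_mul]; field_simp
            rw [h2']
            exact (div_lt_div_iff_of_pos_right hQ0).2 hstrict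
          have h6 := mul_lt_mul_of_pos_left h5 (hk_pos q hqTri)
          rw [← mul_assoc] at h6
          simp only [Function.mem_support]
          intro hcon
          rw [sub_eq_zero] at hcon
          linarith
        have hS_open : IsOpen (({q : ℝ × ℝ | A/2 < q.1} ∩ {q : ℝ × ℝ | q.1 < A}) ∩ ({q : ℝ × ℝ | q.1 - δ < q.2} ∩ {q : ℝ × ℝ | q.2 < q.1})) :=
          ((isOpen_lt continuous_const continuous_fst).inter
            (isOpen_lt continuous_fst continuous_const)).inter
            ((isOpen_lt (continuous_fst.sub continuous_const) continuous_snd).inter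
              (isOpen_lt continuous_snd continuous_fst))
        have hS_ne : Set.Nonempty (({q : ℝ × ℝ | A/2 < q.1} ∩ {q : ℝ × ℝ | q.1 < A}) ∩ ({q : ℝ × ℝ | q.1 - δ < q.2} ∩ {q : ℝ × ℝ | q.2 < q.1})) := by
          refine ⟨(3*A/4, 3*A/4 - δ/2), ⟨?_, ?_⟩, ?_, ?_⟩
          · show A/2 < 3*A/4; linarith
          · show (3*A/4 : ℝ) < A; linarith
          · show 3*A/4 - δ < 3*A/4 - δ/2; linarith
          · show (3*A/4 - δ/2 : ℝ) < 3*A/4; linarith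
        exact lt_of_lt_of_le (hS_open.measure_pos volume hS_ne) (measure_mono hsub)
      have heq : (∫ q in Tri A,
          (kker γ N p θ q.1 q.2 * (Real.exp (-1) / Q)
            - kker γ N p θ q.1 q.2 * Lam θ q.1 q.2 * Real.exp (-Q * Lam θ q.1 q.2)))
          = (∫ q in Tri A, kker γ N p θ q.1 q.2 * (Real.exp (-1) / Q))
            - ∫ q in Tri A, kker γ N p θ q.1 q.2 * Lam θ q.1 q.2
              * Real.exp (-Q * Lam θ q.1 q.2) := integral_sub hgint hfint
      have hgval : (∫ q in Tri A, kker γ N p θ q.1 q.2 * (Real.exp (-1) / Q))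
          = R0 γ N A p θ * Real.exp (-1) / Q := by
        rw [integral_mul_const, R0, mul_div_assoc]
      rw [heq, hgval] at hdiff_pos
      linarith
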